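/- (Bound on the cross term.) Let M := p·(1−p)·( (1/n)·D_d·X·Xᵀ·D_d + (1/σ)·(I − D_d/n)·D_d² ), where D_d and D_δ are the m×m diagonal matrices with diagonal entries d_i and δ_i := γ/(d_i·(1−p)). Then for every v ∈ ℝ^ℓ, rᵀ·D_δ·M·D_δ·X·v ≤ (γ²·p/((1−p)·σ))·( ‖r‖₂² + ‖XᵀX‖·‖v‖₂² )/2, where ‖XᵀX‖ is the spectral norm of XᵀX. -/

import Mathlib

open Matrix Finset

/-- The spectral norm (ℓ2→ℓ2 operator norm) of a real matrix. -/
noncomputable def specNorm {m l : ℕ} (M : Matrix (Fin m) (Fin l) ℝ) : ℝ :=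
  ‖LinearMap.toContinuousLinearMap (Matrix.toEuclideanLin M)‖

lemma quad_le_specNorm {l : ℕ} (A : Matrix (Fin l) (Fin l) ℝ) (v : Fin l → ℝ) :
    v ⬝ᵥ A.mulVec v ≤ specNorm A * ∑ k, v k ^ 2 := by
  set v' : EuclideanSpace ℝ (Fin l) := (WithLp.equiv 2 _).symm v with hv'
  set T := LinearMap.toContinuousLinearMap (Matrix.toEuclideanLin A) with hT
  have h1 : (inner ℝ v' v' : ℝ) = ∑ k, v k ^ 2 := by
    simp [PiLp.inner_apply, RCLike.inner_apply, hv', sq]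
    rw [EuclideanSpace.norm_eq, Real.mul_self_sqrt (by positivity)]; simp [sq]
  have h2 : (inner ℝ v' (T v') : ℝ) = v ⬝ᵥ A.mulVec v := by
    simp [PiLp.inner_apply, RCLike.inner_apply, hv', hT,
      Matrix.toEuclideanLin_apply, dotProduct]
    exact Finset.sum_congr rfl fun i _ => mul_comm _ _
  have h3 : (inner ℝ v' (T v') : ℝ) ≤ ‖v'‖ * ‖T v'‖ := real_inner_le_norm _ _
  have h4 : ‖T v'‖ ≤ ‖T‖ * ‖v'‖ := T.le_opNorm _
  have h5 : ‖v'‖ ^ 2 = ∑ k, v k ^ 2 := by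
    rw [← h1, real_inner_self_eq_norm_sq]
  have : v ⬝ᵥ A.mulVec v ≤ ‖T‖ * ‖v'‖ ^ 2 := by
    rw [← h2]
    calc (inner ℝ v' (T v') : ℝ) ≤ ‖v'‖ * ‖T v'‖ := h3
      _ ≤ ‖v'‖ * (‖T‖ * ‖v'‖) := mul_le_mul_of_nonneg_left h4 (norm_nonneg _)
      _ = ‖T‖ * ‖v'‖ ^ 2 := by ring
  rwa [h5] at this

set_option maxHeartbeats 1600000

/-- **Bound on the cross term.**
For every `v`, `rᵀ D_δ M D_δ X v ≤ (γ² p /((1−p) σ)) (‖r‖₂² + ‖XᵀX‖ ‖v‖₂²)/2`. -/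
theorem sgc_cross_term_bound
    (m l n : ℕ) (hn : 1 ≤ n)
    (X : Matrix (Fin m) (Fin l) ℝ) (y : Fin m → ℝ) (βstar : Fin l → ℝ)
    (hnormal : Xᵀ.mulVec (X.mulVec βstar - y) = 0)
    (p : ℝ) (hp0 : 0 ≤ p) (hp1 : p < 1)
    (γ : ℝ) (hγ : 0 < γ)
    (d : Fin m → ℝ) (hdpos : ∀ i, 0 < d i)
    (σ dbar : ℝ)
    (hdbar : dbar = (∑ i, d i) / m)
    (hσ : σ = n * dbar / (∑ i, ∑ k, X i k ^ 2))
    (hw : ∀ i, d i = σ * ∑ k, X i k ^ 2)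
    (hdn : ∀ i, d i ≤ n)
    (δ : Fin m → ℝ) (hδ : ∀ i, δ i = γ / (d i * (1 - p)))
    (M : Matrix (Fin m) (Fin m) ℝ)
    (hM : M = (p * (1 - p)) •
      ((1 / (n : ℝ)) • (Matrix.diagonal d * (X * Xᵀ) * Matrix.diagonal d) +
        (1 / σ) • ((1 - (1 / (n : ℝ)) • Matrix.diagonal d) *
          (Matrix.diagonal d * Matrix.diagonal d)))) :
    ∀ v : Fin l → ℝ,
      (X.mulVec βstar - y) ⬝ᵥ
          (Matrix.diagonal δ * M * Matrix.diagonal δ * X).mulVec v ≤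
        γ ^ 2 * p / ((1 - p) * σ) *
          (((∑ i, (X.mulVec βstar - y) i ^ 2) + specNorm (Xᵀ * X) * ∑ k, v k ^ 2) / 2) := by
  intro v
  rcases Nat.eq_zero_or_pos m with hm0 | hmpos
  · subst hm0
    have hσ0 : σ = 0 := by simpa using hσ
    rw [hσ0]
    simp [dotProduct]
  -- main case : m ≥ 1
  set r : Fin m → ℝ := X.mulVec βstar - y with hr
  have i₀ : Fin m := ⟨0, hmpos⟩
  have hp' : (0:ℝ) < 1 - p := by linarith
  have hS : (0:ℝ) ≤ ∑ k, X i₀ k ^ 2 := by positivity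
  have hσpos : 0 < σ := by
    by_contra h
    push_neg at h
    have h2 := hw i₀
    have h3 := hdpos i₀
    nlinarith
  have hnpos : (0:ℝ) < (n:ℝ) := by exact_mod_cast hn
  have hn' : ((n:ℝ)) ≠ 0 := hnpos.ne'
  have hσ' : σ ≠ 0 := hσpos.ne'
  have hdne : ∀ i, d i ≠ 0 := fun i => (hdpos i).ne'
  set a : Fin m → ℝ := fun i => 1 - d i / n with ha
  have ha0 : ∀ i, 0 ≤ a i := by
    intro i
    have := hdn i
    have : d i / n ≤ 1 := by
      rw [div_le_one hnpos]; exact hdn i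
    simp only [ha]; linarith
  have ha1 : ∀ i, a i ≤ 1 := by
    intro i
    have h1 : 0 < d i / n := div_pos (hdpos i) hnpos
    simp only [ha]; linarith
  -- the matrix identity
  have hDMD : Matrix.diagonal δ * M * Matrix.diagonal δ =
      (p * γ ^ 2 / (1 - p)) • ((1 / (n : ℝ)) • (X * Xᵀ) +
        (1 / σ) • Matrix.diagonal a) := by
    have hp'' : (1 : ℝ) - p ≠ 0 := hp'.ne'
    have hδd : Matrix.diagonal δ * Matrix.diagonal d
        = (γ / (1 - p)) • (1 : Matrix (Fin m) (Fin m) ℝ) := by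
      rw [Matrix.diagonal_mul_diagonal]
      ext i j
      simp only [Matrix.diagonal_apply, Matrix.smul_apply, Matrix.one_apply, smul_eq_mul]
      rcases eq_or_ne i j with rfl | hij
      · have hd := hdne i
        simp only [if_pos rfl, if_true, hδ]; field_simp
      · simp [hij]
    have hdδ : Matrix.diagonal d * Matrix.diagonal δ
        = (γ / (1 - p)) • (1 : Matrix (Fin m) (Fin m) ℝ) := by
      rw [Matrix.diagonal_mul_diagonal]
      ext i j
      simp only [Matrix.diagonal_apply, Matrix.smul_apply, Matrix.one_apply, smul_eq_mul]
      rcases eq_or_ne i j with rfl | hij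
      · have hd := hdne i
        simp only [if_pos rfl, if_true, hδ]; field_simp
      · simp [hij]
    have h1 : Matrix.diagonal δ * (Matrix.diagonal d * (X * Xᵀ) * Matrix.diagonal d) *
          Matrix.diagonal δ = (γ / (1 - p)) ^ 2 • (X * Xᵀ) := by
      rw [show Matrix.diagonal δ * (Matrix.diagonal d * (X * Xᵀ) * Matrix.diagonal d) *
            Matrix.diagonal δ
          = (Matrix.diagonal δ * Matrix.diagonal d) *
            ((X * Xᵀ) * (Matrix.diagonal d * Matrix.diagonal δ))
          from by simp only [Matrix.mul_assoc], hδd, hdδ]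
      simp only [Matrix.smul_mul, Matrix.mul_smul, Matrix.one_mul, Matrix.mul_one, smul_smul, sq]
    have h2 : Matrix.diagonal δ * ((1 - (1 / (n : ℝ)) • Matrix.diagonal d) *
          (Matrix.diagonal d * Matrix.diagonal d)) * Matrix.diagonal δ
        = (γ / (1 - p)) ^ 2 • Matrix.diagonal a := by
      ext i j
      simp only [Matrix.sub_mul, Matrix.one_mul, Matrix.smul_mul, Matrix.diagonal_mul_diagonal,
        Matrix.mul_sub, Matrix.sub_apply, Matrix.smul_apply, Matrix.diagonal_apply,
        Matrix.mul_smul, smul_eq_mul, ha]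
      rcases eq_or_ne i j with rfl | hij
      · have hd := hdne i
        simp only [if_pos rfl, if_true, hδ]; field_simp
      · simp [hij]
    rw [hM]
    simp only [Matrix.mul_smul, Matrix.smul_mul, Matrix.mul_add, Matrix.add_mul]
    rw [h1, h2]
    match_scalars
    · field_simp
    · field_simp
  rw [hDMD]
  -- expand the product
  set s : Fin m → ℝ := X.mulVec v with hs
  have hexp : (((p * γ ^ 2 / (1 - p)) • ((1 / (n : ℝ)) • (X * Xᵀ) +
        (1 / σ) • Matrix.diagonal a)) * X).mulVec v
      = (p * γ ^ 2 / (1 - p)) • ((1 / (n : ℝ)) • ((X * (Xᵀ * X)).mulVec v) +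
        (1 / σ) • ((Matrix.diagonal a * X).mulVec v)) := by
    simp only [Matrix.smul_mul, Matrix.add_mul, Matrix.smul_mulVec,
      Matrix.add_mulVec, Matrix.mul_assoc]
  rw [hexp]
  have h0 : r ⬝ᵥ (X * (Xᵀ * X)).mulVec v = 0 := by
    rw [← Matrix.mulVec_mulVec, Matrix.dotProduct_mulVec, ← Matrix.mulVec_transpose, hr,
      hnormal]
    exact zero_dotProduct _
  have hB : r ⬝ᵥ (Matrix.diagonal a * X).mulVec v = ∑ i, r i * (a i * s i) := by
    rw [← Matrix.mulVec_mulVec, ← hs]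
    simp [dotProduct, Matrix.mulVec_diagonal]
  have hterm : ∀ i : Fin m, r i * (a i * s i) ≤ (r i ^ 2 + s i ^ 2) / 2 := by
    intro i
    have hhalf : (0:ℝ) ≤ (r i ^ 2 + s i ^ 2) / 2 := by positivity
    have h1 : r i * s i ≤ (r i ^ 2 + s i ^ 2) / 2 := by nlinarith [sq_nonneg (r i - s i)]
    rcases le_or_gt 0 (r i * s i) with h | h
    · calc r i * (a i * s i) = a i * (r i * s i) := by ring
        _ ≤ 1 * (r i * s i) := mul_le_mul_of_nonneg_right (ha1 i) h
        _ = r i * s i := one_mul _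
        _ ≤ (r i ^ 2 + s i ^ 2) / 2 := h1
    · calc r i * (a i * s i) = a i * (r i * s i) := by ring
        _ ≤ 0 := mul_nonpos_of_nonneg_of_nonpos (ha0 i) h.le
        _ ≤ (r i ^ 2 + s i ^ 2) / 2 := hhalf
  have hs2 : ∑ i, s i ^ 2 ≤ specNorm (Xᵀ * X) * ∑ k, v k ^ 2 := by
    have heq : ∑ i, s i ^ 2 = v ⬝ᵥ (Xᵀ * X).mulVec v := by
      have h1 : ∑ i, s i ^ 2 = s ⬝ᵥ s := by simp [dotProduct, sq]
      have h2 : s ⬝ᵥ X.mulVec v = (s ᵥ* X) ⬝ᵥ v := Matrix.dotProduct_mulVec _ _ _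
      rw [h1, hs] at *
      rw [show X.mulVec v ⬝ᵥ X.mulVec v = (X.mulVec v ᵥ* X) ⬝ᵥ v from h2,
        ← Matrix.mulVec_transpose, Matrix.mulVec_mulVec, dotProduct_comm]
    rw [heq]
    exact quad_le_specNorm _ _
  have hBle : r ⬝ᵥ (Matrix.diagonal a * X).mulVec v ≤
      ((∑ i, r i ^ 2) + specNorm (Xᵀ * X) * ∑ k, v k ^ 2) / 2 := by
    rw [hB]
    calc ∑ i, r i * (a i * s i) ≤ ∑ i, (r i ^ 2 + s i ^ 2) / 2 :=
          Finset.sum_le_sum fun i _ => hterm i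
      _ = ((∑ i, r i ^ 2) + ∑ i, s i ^ 2) / 2 := by
          rw [← Finset.sum_div, Finset.sum_add_distrib]
      _ ≤ ((∑ i, r i ^ 2) + specNorm (Xᵀ * X) * ∑ k, v k ^ 2) / 2 := by linarith
  -- put everything together
  have hc : (0:ℝ) ≤ γ ^ 2 * p / ((1 - p) * σ) := by positivity
  have hgen : ∀ w₁ w₂ : Fin m → ℝ,
      r ⬝ᵥ ((p * γ ^ 2 / (1 - p)) • ((1 / (n : ℝ)) • w₁ + (1 / σ) • w₂))
        = (p * γ ^ 2 / (1 - p)) * ((1 / (n : ℝ)) * (r ⬝ᵥ w₁) + (1 / σ) * (r ⬝ᵥ w₂)) := by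
    intro w₁ w₂
    simp only [dotProduct_smul, dotProduct_add, smul_eq_mul]
  rw [hgen, h0]
  have hCB : ∀ B : ℝ, (p * γ ^ 2 / (1 - p)) * ((1 / (n : ℝ)) * 0 + (1 / σ) * B)
      = γ ^ 2 * p / ((1 - p) * σ) * B := by
    intro B
    field_simp
    ring
  rw [hCB]
  exact mul_le_mul_of_nonneg_left hBle hc
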